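/- Let R be a commutative ring with a group homomorphism χ : ℤ_p → Rˣ and an injective ring endomorphism φ : R → R satisfying φ(χ(x)) = χ(p·x) for all x ∈ ℤ_p and R = ⨁_{i=0}^{p-1} χ(i)·φ(R) (internal direct sum as φ(R)-modules). Then for every positive integer c, R = ⨁_{i=0}^{p^c-1} χ(i)·φ^c(R). -/

import Mathlib

/-- If `R` is a commutative ring with `χ : ℤ_p → Rˣ` and an injective ring endomorphism
`φ` with `φ (χ x) = χ (p x)` and `R = ⨁_{i=0}^{p-1} χ(i) φ(R)` (unique decomposition),
then for every `c > 0` we have `R = ⨁_{i=0}^{p^c - 1} χ(i) φ^c(R)`. -/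
theorem stmt0 (p : ℕ) [Fact p.Prime] (R : Type*) [CommRing R]
    (χ : ℤ_[p] → Rˣ) (hχ : ∀ x y : ℤ_[p], χ (x + y) = χ x * χ y)
    (φ : R →+* R) (hφ : Function.Injective φ)
    (hcompat : ∀ x : ℤ_[p], φ ((χ x : R)) = ((χ ((p : ℤ_[p]) * x) : R)))
    (hdirect : ∀ r : R, ∃! f : Fin p → R,
      r = ∑ i : Fin p, ((χ (((i : ℕ) : ℤ_[p])) : R)) * φ (f i))
    (c : ℕ) (hc : 0 < c) :
    ∀ r : R, ∃! f : Fin (p ^ c) → R,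
      r = ∑ i : Fin (p ^ c), ((χ (((i : ℕ) : ℤ_[p])) : R)) * (⇑φ)^[c] (f i) := by
  clear hc
  have hχ0 : (χ 0 : R) = 1 := by
    have h := hχ 0 0
    rw [add_zero] at h
    rw [left_eq_mul.mp h]; rfl
  induction c with
  | zero =>
    intro r
    show ∃! f : Fin 1 → R, r = ∑ i : Fin 1, ((χ (((i : ℕ) : ℤ_[p])) : R)) * (⇑φ)^[0] (f i)
    refine ⟨fun _ => r, ?_, fun g hg => funext fun i => ?_⟩
    · simp [hχ0]
    · fin_cases i
      simpa [hχ0] using hg.symm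
  | succ c IH =>
    set e : Fin (p ^ c) × Fin p ≃ Fin (p ^ (c + 1)) :=
      finProdFinEquiv.trans (finCongr (pow_succ p c).symm) with he
    have heval : ∀ (j : Fin (p ^ c)) (i : Fin p),
        ((e (j, i) : ℕ) : ℤ_[p]) = ((i : ℕ) : ℤ_[p]) + (p : ℤ_[p]) * ((j : ℕ) : ℤ_[p]) := by
      intro j i
      have h1 : (e (j, i) : ℕ) = (i : ℕ) + p * (j : ℕ) := by
        simp only [he, Equiv.trans_apply, finCongr_apply, Fin.coe_cast]
        exact finProdFinEquiv_apply_val (j, i)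
      rw [h1]; push_cast; ring
    have key : ∀ h : Fin (p ^ (c + 1)) → R,
        ∑ k : Fin (p ^ (c + 1)), ((χ (((k : ℕ) : ℤ_[p])) : R)) * (⇑φ)^[c + 1] (h k)
          = ∑ i : Fin p, ((χ (((i : ℕ) : ℤ_[p])) : R)) *
              φ (∑ j : Fin (p ^ c), ((χ (((j : ℕ) : ℤ_[p])) : R)) * (⇑φ)^[c] (h (e (j, i)))) := by
      intro h
      rw [← Equiv.sum_comp e (fun k => ((χ (((k : ℕ) : ℤ_[p])) : R)) * (⇑φ)^[c + 1] (h k))]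
      rw [Fintype.sum_prod_type_right]
      refine Finset.sum_congr rfl fun i _ => ?_
      rw [map_sum, Finset.mul_sum]
      refine Finset.sum_congr rfl fun j _ => ?_
      rw [map_mul, hcompat, ← mul_assoc, ← Units.val_mul, ← hχ, ← heval j i,
        Function.iterate_succ_apply' φ c]
    intro r
    obtain ⟨f, hf, hfu⟩ := hdirect r
    choose g hg hgu using fun i => IH (f i)
    refine ⟨fun k => g (e.symm k).2 (e.symm k).1, ?_, ?_⟩
    · show r = ∑ k : Fin (p ^ (c + 1)), ((χ (((k : ℕ) : ℤ_[p])) : R)) *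
        (⇑φ)^[c + 1] (g (e.symm k).2 (e.symm k).1)
      rw [key]
      simp only [Equiv.symm_apply_apply]
      rw [hf]
      exact Finset.sum_congr rfl fun i _ => by rw [hg i]
    · intro h' hh'
      have h1 : (fun i => ∑ j : Fin (p ^ c),
          ((χ (((j : ℕ) : ℤ_[p])) : R)) * (⇑φ)^[c] (h' (e (j, i)))) = f := by
        apply hfu
        try dsimp only
        rw [hh' , key]
      funext k
      have h2 : ∀ i, (fun j => h' (e (j, i))) = g i := by
        intro i
        apply hgu
        exact (congrFun h1 i).symm
      have h3 := congrFun (h2 (e.symm k).2) (e.symm k).1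
      simpa using h3
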